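/- Let d ≥ 1 and let Λ ⊆ ℕ^d be a finite, nonempty multi-index set that is downward closed and convex. Then Λ has a unique maximal half-set, namely ⌊½Λ⌋ := {⌊α/2⌋ : α ∈ Λ}: the set ⌊½Λ⌋ is a half-set for Λ, every half-set for Λ is contained in ⌊½Λ⌋, and consequently every half-set of maximal cardinality equals ⌊½Λ⌋. -/

import Mathlib

open Pointwise

/-- If `Λ ⊆ ℕ^d` is finite, nonempty, downward closed and convex, then
`⌊½Λ⌋ = {⌊α/2⌋ : α ∈ Λ}` is the unique maximal half-set of `Λ`: it is a half-set,
every half-set is contained in it, and every half-set of maximal cardinality equals it. -/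
theorem floor_half_unique_maximal_half_set {d : ℕ} (hd : 1 ≤ d)
    (Λ : Finset (Fin d → ℕ)) (hne : Λ.Nonempty)
    (hdc : ∀ α ∈ Λ, ∀ β : Fin d → ℕ, β ≤ α → β ∈ Λ)
    (hconv : ∀ t : ℝ, 0 ≤ t → t ≤ 1 → ∀ α ∈ Λ, ∀ β ∈ Λ,
      (fun j => ⌊t * (α j : ℝ) + (1 - t) * (β j : ℝ)⌋₊) ∈ Λ) :
    ((Λ.image fun α j => α j / 2) + (Λ.image fun α j => α j / 2) ⊆ Λ) ∧
    (∀ Θ : Finset (Fin d → ℕ), Θ + Θ ⊆ Λ → Θ ⊆ Λ.image fun α j => α j / 2) ∧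
    (∀ Θ : Finset (Fin d → ℕ), Θ + Θ ⊆ Λ →
      (∀ Θ' : Finset (Fin d → ℕ), Θ' + Θ' ⊆ Λ → Θ'.card ≤ Θ.card) →
      Θ = Λ.image fun α j => α j / 2) := by
  have key : ∀ α ∈ Λ, ∀ β ∈ Λ, (fun j => (α j + β j) / 2) ∈ Λ := by
    intro α hα β hβ
    have h := hconv (1/2) (by norm_num) (by norm_num) α hα β hβ
    convert h using 2 with j
    rw [show (1/2:ℝ) * α j + (1 - 1/2) * β j = ((α j + β j : ℕ) : ℝ)/2 by push_cast; ring]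
    rw [show (2:ℝ) = ((2:ℕ):ℝ) from by norm_num, Nat.floor_div_natCast, Nat.floor_natCast]
  have h1 : (Λ.image fun α j => α j / 2) + (Λ.image fun α j => α j / 2) ⊆ Λ := by
    intro z hz
    rw [Finset.mem_add] at hz
    obtain ⟨x, hx, y, hy, rfl⟩ := hz
    rw [Finset.mem_image] at hx hy
    obtain ⟨α, hα, rfl⟩ := hx
    obtain ⟨β, hβ, rfl⟩ := hy
    exact hdc _ (key α hα β hβ) _ (fun j => by simp; omega)
  have h2 : ∀ Θ : Finset (Fin d → ℕ), Θ + Θ ⊆ Λ → Θ ⊆ Λ.image fun α j => α j / 2 := by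
    intro Θ hΘ θ hθ
    have h2θ : θ + θ ∈ Λ := hΘ (Finset.add_mem_add hθ hθ)
    rw [Finset.mem_image]
    exact ⟨θ + θ, h2θ, by funext j; simp; omega⟩
  exact ⟨h1, h2, fun Θ hΘ hmax => Finset.eq_of_subset_of_card_le (h2 Θ hΘ) (hmax _ h1)⟩
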